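/- For nonzero complex a, b, c, d, e with all denominators nonzero and any integer n ≥ 0: Σ_{k=0}^{n} [(1 - bcde p^{2k}/a)/(1 - bcde/a)] · (b, d, e, bc^2de/a^2; p)_k / (ap/c, cdep/a, bcep/a, bcdp/a; p)_k · p^k = [(1-c/a)(1-cde/a)(1-bce/a)(1-bcd/a)] / [(1-bc/a)(1-cd/a)(1-ce/a)(1-bcde/a)] · (1 - (b,d,e,bc^2de/a^2;p)_{n+1} / (a/c, cde/a, bce/a, bcd/a;p)_{n+1}). -/

import Mathlib

open Finset

/-- The q-shifted factorial `(a;q)_k`. -/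
noncomputable def qPoch (a q : ℂ) (k : ℕ) : ℂ := ∏ j ∈ Finset.range k, (1 - a * q ^ j)

lemma qPoch_zero (a q : ℂ) : qPoch a q 0 = 1 := by simp [qPoch]

lemma qPoch_succ (a q : ℂ) (k : ℕ) :
    qPoch a q (k + 1) = qPoch a q k * (1 - a * q ^ k) :=
  Finset.prod_range_succ _ _

lemma qPoch_succ' (a q : ℂ) (k : ℕ) :
    qPoch a q (k + 1) = (1 - a) * qPoch (a * q) q k := by
  unfold qPoch
  rw [Finset.prod_range_succ', mul_comm]
  simp only [pow_zero, mul_one]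
  congr 1
  refine Finset.prod_congr rfl fun j _ => ?_
  ring

lemma qPoch_factor_ne_zero {a q : ℂ} {m : ℕ} (hm : qPoch a q m ≠ 0) {j : ℕ}
    (hj : j < m) : 1 - a * q ^ j ≠ 0 := by
  intro h0
  exact hm (Finset.prod_eq_zero (Finset.mem_range.mpr hj) h0)

lemma qPoch_ne_zero_mono {a q : ℂ} {m k : ℕ} (h : k ≤ m) (hm : qPoch a q m ≠ 0) :
    qPoch a q k ≠ 0 := by
  intro h0
  apply hm
  have h2 : qPoch a q (k + (m - k)) = qPoch a q k * ∏ j ∈ Finset.range (m - k), (1 - a * q ^ (k + j)) := by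
    unfold qPoch
    rw [Finset.prod_range_add]
  rw [Nat.add_sub_cancel' h] at h2
  rw [h2, h0, zero_mul]


lemma pcore (a b c d e Q : ℂ) :
    (c - a * Q) * (a - c * d * e * Q) * (a - b * c * e * Q) * (a - b * c * d * Q) -
      a * c * (1 - b * Q) * (1 - d * Q) * (1 - e * Q) * (a ^ 2 - b * c ^ 2 * d * e * Q) =
    -((a - b * c * d * e * (Q * Q)) * (a - b * c) * (a - c * d) * (a - c * e) * Q) := by
  ring

set_option maxHeartbeats 2000000 in
lemma hXY (a b c d e Q : ℂ) (ha : a ≠ 0) (hc : c ≠ 0) :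
    (1 - a / c * Q) * (1 - c * d * e / a * Q) * (1 - b * c * e / a * Q) *
        (1 - b * c * d / a * Q) -
      (1 - b * Q) * (1 - d * Q) * (1 - e * Q) * (1 - b * c ^ 2 * d * e / a ^ 2 * Q) =
    (1 - b * c * d * e * (Q * Q) / a) * Q * (-(a / c)) *
      ((1 - b * c / a) * (1 - c * d / a) * (1 - c * e / a)) := by
  field_simp
  linear_combination pcore a b c d e Q

set_option maxHeartbeats 2000000 in
lemma step2aux (a b c d e Q : ℂ) (ha : a ≠ 0) (hc : c ≠ 0)
    (h1 : 1 - b * c / a ≠ 0) (h2 : 1 - c * d / a ≠ 0) (h3 : 1 - c * e / a ≠ 0)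
    (hh : 1 - b * c * d * e / a ≠ 0) :
    (1 - b * c * d * e * (Q * Q) / a) * Q *
      ((1 - a / c) * (1 - c * d * e / a) * (1 - b * c * e / a) * (1 - b * c * d / a)) =
    ((1 - c / a) * (1 - c * d * e / a) * (1 - b * c * e / a) * (1 - b * c * d / a) /
      ((1 - b * c / a) * (1 - c * d / a) * (1 - c * e / a) * (1 - b * c * d * e / a))) *
      ((1 - a / c * Q) * (1 - c * d * e / a * Q) * (1 - b * c * e / a * Q) *
          (1 - b * c * d / a * Q) -
        (1 - b * Q) * (1 - d * Q) * (1 - e * Q) * (1 - b * c ^ 2 * d * e / a ^ 2 * Q)) *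
      (1 - b * c * d * e / a) := by
  rw [hXY a b c d e Q ha hc, div_mul_eq_mul_div, div_mul_eq_mul_div,
    eq_div_iff (mul_ne_zero (mul_ne_zero (mul_ne_zero h1 h2) h3) hh)]
  field_simp
  ring

set_option maxHeartbeats 2000000 in
/-- Gasper's bibasic summation formula. -/
theorem gasper_bibasic_summation
    (a b c d e p : ℂ) (n : ℕ)
    (ha : a ≠ 0) (hb : b ≠ 0) (hc : c ≠ 0) (hd : d ≠ 0) (he : e ≠ 0) (hp : p ≠ 0)
    (hbcde : 1 - b * c * d * e / a ≠ 0)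
    (hfac : (1 - b * c / a) * (1 - c * d / a) * (1 - c * e / a) * (1 - b * c * d * e / a) ≠ 0)
    (hden : ∀ k ≤ n, qPoch (a * p / c) p k * qPoch (c * d * e * p / a) p k *
      qPoch (b * c * e * p / a) p k * qPoch (b * c * d * p / a) p k ≠ 0)
    (hden' : qPoch (a / c) p (n + 1) * qPoch (c * d * e / a) p (n + 1) *
      qPoch (b * c * e / a) p (n + 1) * qPoch (b * c * d / a) p (n + 1) ≠ 0) :
    ∑ k ∈ Finset.range (n + 1),
        (1 - b * c * d * e * p ^ (2 * k) / a) / (1 - b * c * d * e / a) *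
          ((qPoch b p k * qPoch d p k * qPoch e p k * qPoch (b * c ^ 2 * d * e / a ^ 2) p k) /
            (qPoch (a * p / c) p k * qPoch (c * d * e * p / a) p k *
              qPoch (b * c * e * p / a) p k * qPoch (b * c * d * p / a) p k)) * p ^ k =
      ((1 - c / a) * (1 - c * d * e / a) * (1 - b * c * e / a) * (1 - b * c * d / a)) /
          ((1 - b * c / a) * (1 - c * d / a) * (1 - c * e / a) * (1 - b * c * d * e / a)) *
        (1 - (qPoch b p (n + 1) * qPoch d p (n + 1) * qPoch e p (n + 1) *
            qPoch (b * c ^ 2 * d * e / a ^ 2) p (n + 1)) /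
          (qPoch (a / c) p (n + 1) * qPoch (c * d * e / a) p (n + 1) *
            qPoch (b * c * e / a) p (n + 1) * qPoch (b * c * d / a) p (n + 1))) := by
  -- nonzeroness of the individual simple factors
  have h1 : (1 : ℂ) - b * c / a ≠ 0 := fun h => hfac (by rw [h]; ring)
  have h2 : (1 : ℂ) - c * d / a ≠ 0 := fun h => hfac (by rw [h]; ring)
  have h3 : (1 : ℂ) - c * e / a ≠ 0 := fun h => hfac (by rw [h]; ring)
  -- decompose hden'
  have hq1 : qPoch (a / c) p (n + 1) ≠ 0 := fun h => hden' (by rw [h]; ring)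
  have hq2 : qPoch (c * d * e / a) p (n + 1) ≠ 0 := fun h => hden' (by rw [h]; ring)
  have hq3 : qPoch (b * c * e / a) p (n + 1) ≠ 0 := fun h => hden' (by rw [h]; ring)
  have hq4 : qPoch (b * c * d / a) p (n + 1) ≠ 0 := fun h => hden' (by rw [h]; ring)
  have hE1 : (1 : ℂ) - a / c ≠ 0 := by
    have := qPoch_factor_ne_zero hq1 (Nat.succ_pos n); simpa using this
  have hE2 : (1 : ℂ) - c * d * e / a ≠ 0 := by
    have := qPoch_factor_ne_zero hq2 (Nat.succ_pos n); simpa using this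
  have hE3 : (1 : ℂ) - b * c * e / a ≠ 0 := by
    have := qPoch_factor_ne_zero hq3 (Nat.succ_pos n); simpa using this
  have hE4 : (1 : ℂ) - b * c * d / a ≠ 0 := by
    have := qPoch_factor_ne_zero hq4 (Nat.succ_pos n); simpa using this
  set C : ℂ := ((1 - c / a) * (1 - c * d * e / a) * (1 - b * c * e / a) * (1 - b * c * d / a)) /
      ((1 - b * c / a) * (1 - c * d / a) * (1 - c * e / a) * (1 - b * c * d * e / a)) with hC
  set F : ℕ → ℂ := fun k =>
    (qPoch b p k * qPoch d p k * qPoch e p k * qPoch (b * c ^ 2 * d * e / a ^ 2) p k) /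
      (qPoch (a / c) p k * qPoch (c * d * e / a) p k *
        qPoch (b * c * e / a) p k * qPoch (b * c * d / a) p k) with hFdef
  have key : ∀ k ≤ n,
      (1 - b * c * d * e * p ^ (2 * k) / a) / (1 - b * c * d * e / a) *
        ((qPoch b p k * qPoch d p k * qPoch e p k * qPoch (b * c ^ 2 * d * e / a ^ 2) p k) /
          (qPoch (a * p / c) p k * qPoch (c * d * e * p / a) p k *
            qPoch (b * c * e * p / a) p k * qPoch (b * c * d * p / a) p k)) * p ^ k =
      C * (F k - F (k + 1)) := by
    intro k hk
    have hkk : k < n + 1 := Nat.lt_succ_of_le hk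
    have hB1 : qPoch (a / c) p k ≠ 0 := qPoch_ne_zero_mono (le_of_lt hkk) hq1
    have hB2 : qPoch (c * d * e / a) p k ≠ 0 := qPoch_ne_zero_mono (le_of_lt hkk) hq2
    have hB3 : qPoch (b * c * e / a) p k ≠ 0 := qPoch_ne_zero_mono (le_of_lt hkk) hq3
    have hB4 : qPoch (b * c * d / a) p k ≠ 0 := qPoch_ne_zero_mono (le_of_lt hkk) hq4
    have hX1 : (1 : ℂ) - a / c * p ^ k ≠ 0 := qPoch_factor_ne_zero hq1 hkk
    have hX2 : (1 : ℂ) - c * d * e / a * p ^ k ≠ 0 := qPoch_factor_ne_zero hq2 hkk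
    have hX3 : (1 : ℂ) - b * c * e / a * p ^ k ≠ 0 := qPoch_factor_ne_zero hq3 hkk
    have hX4 : (1 : ℂ) - b * c * d / a * p ^ k ≠ 0 := qPoch_factor_ne_zero hq4 hkk
    have hDall := hden k hk
    have hD1 : qPoch (a * p / c) p k ≠ 0 := fun h => hDall (by rw [h]; ring)
    have hD2 : qPoch (c * d * e * p / a) p k ≠ 0 := fun h => hDall (by rw [h]; ring)
    have hD3 : qPoch (b * c * e * p / a) p k ≠ 0 := fun h => hDall (by rw [h]; ring)
    have hD4 : qPoch (b * c * d * p / a) p k ≠ 0 := fun h => hDall (by rw [h]; ring)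
    have hm1 : qPoch (a / c) p k * (1 - a / c * p ^ k) = (1 - a / c) * qPoch (a * p / c) p k := by
      have h := (qPoch_succ (a / c) p k).symm.trans (qPoch_succ' (a / c) p k)
      rwa [show a / c * p = a * p / c from by ring] at h
    have hm2 : qPoch (c * d * e / a) p k * (1 - c * d * e / a * p ^ k)
        = (1 - c * d * e / a) * qPoch (c * d * e * p / a) p k := by
      have h := (qPoch_succ (c * d * e / a) p k).symm.trans (qPoch_succ' (c * d * e / a) p k)
      rwa [show c * d * e / a * p = c * d * e * p / a from by ring] at h
    have hm3 : qPoch (b * c * e / a) p k * (1 - b * c * e / a * p ^ k)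
        = (1 - b * c * e / a) * qPoch (b * c * e * p / a) p k := by
      have h := (qPoch_succ (b * c * e / a) p k).symm.trans (qPoch_succ' (b * c * e / a) p k)
      rwa [show b * c * e / a * p = b * c * e * p / a from by ring] at h
    have hm4 : qPoch (b * c * d / a) p k * (1 - b * c * d / a * p ^ k)
        = (1 - b * c * d / a) * qPoch (b * c * d * p / a) p k := by
      have h := (qPoch_succ (b * c * d / a) p k).symm.trans (qPoch_succ' (b * c * d / a) p k)
      rwa [show b * c * d / a * p = b * c * d * p / a from by ring] at h
    simp only [hFdef]
    rw [qPoch_succ b p k, qPoch_succ d p k, qPoch_succ e p k,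
      qPoch_succ (b * c ^ 2 * d * e / a ^ 2) p k,
      qPoch_succ' (a / c) p k, qPoch_succ' (c * d * e / a) p k,
      qPoch_succ' (b * c * e / a) p k, qPoch_succ' (b * c * d / a) p k,
      show a / c * p = a * p / c from by ring,
      show c * d * e / a * p = c * d * e * p / a from by ring,
      show b * c * e / a * p = b * c * e * p / a from by ring,
      show b * c * d / a * p = b * c * d * p / a from by ring,
      two_mul, pow_add]
    set Q := p ^ k with hQ
    set qb := qPoch b p k with hqb
    set qd := qPoch d p k with hqd
    set qe := qPoch e p k with hqe
    set qf := qPoch (b * c ^ 2 * d * e / a ^ 2) p k with hqf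
    set B1 := qPoch (a / c) p k with hB1d
    set B2 := qPoch (c * d * e / a) p k with hB2d
    set B3 := qPoch (b * c * e / a) p k with hB3d
    set B4 := qPoch (b * c * d / a) p k with hB4d
    set D1 := qPoch (a * p / c) p k with hD1d
    set D2 := qPoch (c * d * e * p / a) p k with hD2d
    set D3 := qPoch (b * c * e * p / a) p k with hD3d
    set D4 := qPoch (b * c * d * p / a) p k with hD4d
    have hE : ((1 - a / c) * (1 - c * d * e / a) * (1 - b * c * e / a) * (1 - b * c * d / a)) ≠ 0 :=
      mul_ne_zero (mul_ne_zero (mul_ne_zero hE1 hE2) hE3) hE4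
    have hED : ((1 - a / c) * (1 - c * d * e / a) * (1 - b * c * e / a) * (1 - b * c * d / a)) *
        (D1 * D2 * D3 * D4) ≠ 0 := mul_ne_zero hE hDall
    have hBB : B1 * B2 * B3 * B4 ≠ 0 :=
      mul_ne_zero (mul_ne_zero (mul_ne_zero hB1 hB2) hB3) hB4
    have r1 : qb * qd * qe * qf / (B1 * B2 * B3 * B4) =
        qb * qd * qe * qf *
          ((1 - a / c * Q) * (1 - c * d * e / a * Q) * (1 - b * c * e / a * Q) *
            (1 - b * c * d / a * Q)) /
        (((1 - a / c) * (1 - c * d * e / a) * (1 - b * c * e / a) * (1 - b * c * d / a)) *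
          (D1 * D2 * D3 * D4)) := by
      rw [div_eq_div_iff hBB hED]
      linear_combination
        (-(qb * qd * qe * qf)) * (((1 - c * d * e / a) * D2) * ((1 - b * c * e / a) * D3) *
          ((1 - b * c * d / a) * D4)) * hm1 +
        (-(qb * qd * qe * qf)) * (B1 * (1 - a / c * Q)) * (((1 - b * c * e / a) * D3) *
          ((1 - b * c * d / a) * D4)) * hm2 +
        (-(qb * qd * qe * qf)) * (B1 * (1 - a / c * Q) * (B2 * (1 - c * d * e / a * Q))) *
          ((1 - b * c * d / a) * D4) * hm3 +
        (-(qb * qd * qe * qf)) * (B1 * (1 - a / c * Q) * (B2 * (1 - c * d * e / a * Q)) *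
          (B3 * (1 - b * c * e / a * Q))) * hm4
    have r2 : qb * (1 - b * Q) * (qd * (1 - d * Q)) * (qe * (1 - e * Q)) *
          (qf * (1 - b * c ^ 2 * d * e / a ^ 2 * Q)) /
        ((1 - a / c) * D1 * ((1 - c * d * e / a) * D2) * ((1 - b * c * e / a) * D3) *
          ((1 - b * c * d / a) * D4)) =
        qb * qd * qe * qf *
          ((1 - b * Q) * (1 - d * Q) * (1 - e * Q) * (1 - b * c ^ 2 * d * e / a ^ 2 * Q)) /
        (((1 - a / c) * (1 - c * d * e / a) * (1 - b * c * e / a) * (1 - b * c * d / a)) *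
          (D1 * D2 * D3 * D4)) := by
      rw [div_eq_div_iff (mul_ne_zero (mul_ne_zero (mul_ne_zero (mul_ne_zero hE1 hD1)
        (mul_ne_zero hE2 hD2)) (mul_ne_zero hE3 hD3)) (mul_ne_zero hE4 hD4)) hED]
      ring
    rw [r1, r2, div_sub_div_same]
    have s2 := step2aux a b c d e Q ha hc h1 h2 h3 hbcde
    rw [← hC] at s2
    rw [div_mul_div_comm, div_mul_eq_mul_div, ← mul_div_assoc,
      div_eq_div_iff (mul_ne_zero hbcde hDall) hED]
    linear_combination (qb * qd * qe * qf) * (D1 * D2 * D3 * D4) * s2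
  calc
    ∑ k ∈ Finset.range (n + 1),
        (1 - b * c * d * e * p ^ (2 * k) / a) / (1 - b * c * d * e / a) *
          ((qPoch b p k * qPoch d p k * qPoch e p k * qPoch (b * c ^ 2 * d * e / a ^ 2) p k) /
            (qPoch (a * p / c) p k * qPoch (c * d * e * p / a) p k *
              qPoch (b * c * e * p / a) p k * qPoch (b * c * d * p / a) p k)) * p ^ k
      = ∑ k ∈ Finset.range (n + 1), C * (F k - F (k + 1)) :=
        Finset.sum_congr rfl fun k hk => key k (Nat.lt_succ_iff.mp (Finset.mem_range.mp hk))
    _ = C * ∑ k ∈ Finset.range (n + 1), (F k - F (k + 1)) := by rw [Finset.mul_sum]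
    _ = C * (F 0 - F (n + 1)) := by rw [Finset.sum_range_sub']
    _ = C * (1 - F (n + 1)) := by
        have : F 0 = 1 := by simp [hFdef, qPoch_zero]
        rw [this]
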